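/- Let (a_ℓ)_{ℓ≥1} be a sequence of positive integers and let α = [0; a_1, a_2, …] with convergents p_ℓ/q_ℓ. Let s and m be integers with 1 ≤ s ≤ m, and assume the prefix a_1 ⋯ a_m is periodic with period s, i.e., a_{h+s} = a_h for all 1 ≤ h ≤ m − s. Let P(X) = q_{s−1} X² + (q_s − p_{s−1}) X − p_s. Then |P(α)| ≤ 4 · q_s · q_m^{−2}. -/

import Mathlib

open Filter Topology

/-- Denominators of the convergents of the continued fraction `[0; a 0, a 1, ...]`,
where `a i` denotes the `(i+1)`-st partial quotient `a_{i+1}` of the paper: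
`q_0 = 1`, `q_1 = a_1`, `q_{ℓ+1} = a_{ℓ+1} q_ℓ + q_{ℓ-1}`. -/
def cfQ (a : ℕ → ℕ) : ℕ → ℕ
  | 0 => 1
  | 1 => a 0
  | n + 2 => a (n + 1) * cfQ a (n + 1) + cfQ a n

/-- Numerators of the convergents of the continued fraction `[0; a 0, a 1, ...]`:
`p_0 = 0`, `p_1 = 1`, `p_{ℓ+1} = a_{ℓ+1} p_ℓ + p_{ℓ-1}`. -/
def cfP (a : ℕ → ℕ) : ℕ → ℕ
  | 0 => 0
  | 1 => 1
  | n + 2 => a (n + 1) * cfP a (n + 1) + cfP a n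


section helpers

variable (a : ℕ → ℕ)

lemma cfQ_pos (hpos : ∀ i, 0 < a i) : ∀ n, 0 < cfQ a n
  | 0 => one_pos
  | 1 => hpos 0
  | n + 2 => by
      simp only [cfQ]
      exact Nat.add_pos_right _ (cfQ_pos hpos n)

lemma cfQ_mono_succ (hpos : ∀ i, 0 < a i) : ∀ n, cfQ a n ≤ cfQ a (n + 1)
  | 0 => by simpa [cfQ] using Nat.one_le_iff_ne_zero.mpr (hpos 0).ne'
  | n + 1 => by
      simp only [cfQ]
      calc cfQ a (n+1) = 1 * cfQ a (n+1) := (one_mul _).symm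
        _ ≤ a (n+1) * cfQ a (n+1) := Nat.mul_le_mul_right _ (hpos (n+1))
        _ ≤ _ := Nat.le_add_right _ _

lemma cfQ_mono (hpos : ∀ i, 0 < a i) : Monotone (cfQ a) :=
  monotone_nat_of_le_succ (cfQ_mono_succ a hpos)

lemma cfP_le_cfQ (hpos : ∀ i, 0 < a i) : ∀ n, cfP a n ≤ cfQ a n
  | 0 => by simp [cfP, cfQ]
  | 1 => by simpa [cfP, cfQ] using Nat.one_le_iff_ne_zero.mpr (hpos 0).ne'
  | n + 2 => by
      simp only [cfP, cfQ]
      exact Nat.add_le_add (Nat.mul_le_mul_left _ (cfP_le_cfQ hpos (n+1)))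
        (cfP_le_cfQ hpos n)

lemma cf_det : ∀ n, (cfP a (n+1) : ℤ) * cfQ a n - cfP a n * cfQ a (n+1) = (-1)^n
  | 0 => by simp [cfP, cfQ]
  | n + 1 => by
      have h := cf_det n
      show (cfP a (n+2) : ℤ) * cfQ a (n+1) - cfP a (n+1) * cfQ a (n+2) = (-1)^(n+1)
      simp only [cfP, cfQ]
      push_cast
      linear_combination (-1 : ℤ) * h

end helpers

noncomputable def cfX (a : ℕ → ℕ) (n : ℕ) : ℝ := (cfP a n : ℝ) / (cfQ a n : ℝ)

lemma cfX_diff (a : ℕ → ℕ) (hpos : ∀ i, 0 < a i) (n : ℕ) :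
    cfX a (n+1) - cfX a n = (-1)^n / ((cfQ a n : ℝ) * (cfQ a (n+1) : ℝ)) := by
  have h0 : (0:ℝ) < (cfQ a n : ℝ) := by exact_mod_cast cfQ_pos a hpos n
  have h1 : (0:ℝ) < (cfQ a (n+1) : ℝ) := by exact_mod_cast cfQ_pos a hpos (n+1)
  have hd : (cfP a (n+1) : ℝ) * cfQ a n - cfP a n * cfQ a (n+1) = (-1)^n := by
    exact_mod_cast congrArg (Int.cast : ℤ → ℝ) (cf_det a n)
  unfold cfX
  field_simp
  linear_combination hd

lemma cfX_sandwich (a : ℕ → ℕ) (hpos : ∀ i, 0 < a i) : ∀ k n, 0 ≤ (-1:ℝ)^n * (cfX a (n+k) - cfX a n) ∧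
    (-1:ℝ)^n * (cfX a (n+k) - cfX a n) ≤ 1 / ((cfQ a n : ℝ) * (cfQ a (n+1) : ℝ)) := by
  intro k
  induction k with
  | zero =>
      intro n
      have h0 : (0:ℝ) < (cfQ a n : ℝ) := by exact_mod_cast cfQ_pos a hpos n
      have h1 : (0:ℝ) < (cfQ a (n+1) : ℝ) := by exact_mod_cast cfQ_pos a hpos (n+1)
      simp
      positivity
  | succ k ih =>
      intro n
      have h0 : (0:ℝ) < (cfQ a n : ℝ) := by exact_mod_cast cfQ_pos a hpos n
      have h1 : (0:ℝ) < (cfQ a (n+1) : ℝ) := by exact_mod_cast cfQ_pos a hpos (n+1)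
      have h2 : (0:ℝ) < (cfQ a (n+2) : ℝ) := by exact_mod_cast cfQ_pos a hpos (n+2)
      have hm : (cfQ a n : ℝ) ≤ (cfQ a (n+2) : ℝ) := by
        exact_mod_cast cfQ_mono a hpos (by omega : n ≤ n+2)
      have hdiff := cfX_diff a hpos n
      have hih := ih (n+1)
      have hsplit : cfX a (n+(k+1)) - cfX a n
          = (cfX a ((n+1)+k) - cfX a (n+1)) + (cfX a (n+1) - cfX a n) := by
        have : n + (k+1) = (n+1) + k := by omega
        rw [this]; ring
      have hsgn : ((-1:ℝ)^(n+1)) = -((-1:ℝ)^n) := by ring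
      have hsq : ((-1:ℝ)^n)^2 = 1 := by
        rcases Nat.even_or_odd n with h | h
        · rw [h.neg_one_pow]; norm_num
        · rw [h.neg_one_pow]; norm_num
      have hle : 1 / ((cfQ a (n+1) : ℝ) * (cfQ a (n+2) : ℝ))
          ≤ 1 / ((cfQ a n : ℝ) * (cfQ a (n+1) : ℝ)) := by
        apply one_div_le_one_div_of_le (by positivity)
        calc (cfQ a n : ℝ) * (cfQ a (n+1) : ℝ) = (cfQ a (n+1) : ℝ) * (cfQ a n : ℝ) := by ring
          _ ≤ _ := mul_le_mul_of_nonneg_left hm (le_of_lt h1)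
      have hd2 : (-1:ℝ)^n * (cfX a (n+1) - cfX a n)
          = 1 / ((cfQ a n : ℝ) * (cfQ a (n+1) : ℝ)) := by
        rw [hdiff, ← mul_div_assoc, ← pow_add, Even.neg_one_pow ⟨n, rfl⟩]
      obtain ⟨hih1, hih2⟩ := hih
      rw [hsgn, neg_mul] at hih1 hih2
      have hnn : n + 1 + 1 = n + 2 := by omega
      rw [hnn] at hih2
      have hexp : (-1:ℝ)^n * ((cfX a (n+1+k) - cfX a (n+1)) + (cfX a (n+1) - cfX a n))
          = (-1:ℝ)^n * (cfX a (n+1+k) - cfX a (n+1))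
            + (-1:ℝ)^n * (cfX a (n+1) - cfX a n) := mul_add _ _ _
      constructor
      · rw [hsplit]
        linarith [hexp, hd2, hih1, hih2, hle]
      · rw [hsplit]
        linarith [hexp, hd2, hih1, hih2, hle]

lemma cf_period (a : ℕ → ℕ) (s m t : ℕ) (hst : s = t + 1) (hsm : s ≤ m)
    (hper : ∀ i, i + s < m → a (i + s) = a i) :
    ∀ ℓ, ℓ ≤ m - s → cfQ a (s+ℓ) = cfQ a s * cfQ a ℓ + cfQ a t * cfP a ℓ ∧
      cfP a (s+ℓ) = cfP a s * cfQ a ℓ + cfP a t * cfP a ℓ := by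
  intro ℓ
  induction ℓ using Nat.strong_induction_on with
  | _ ℓ ih =>
    match ℓ with
    | 0 => intro _; simp [cfQ, cfP]
    | 1 =>
      intro h1
      have ha : a s = a 0 := by simpa using hper 0 (by omega)
      have h2 : s + 1 = t + 2 := by omega
      have h3 : t + 1 = s := by omega
      rw [h2]
      constructor
      · show a (t+1) * cfQ a (t+1) + cfQ a t = cfQ a s * cfQ a 1 + cfQ a t * cfP a 1
        rw [h3, ha]
        show a 0 * cfQ a s + cfQ a t = cfQ a s * a 0 + cfQ a t * 1
        ring
      · show a (t+1) * cfP a (t+1) + cfP a t = cfP a s * cfQ a 1 + cfP a t * cfP a 1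
        rw [h3, ha]
        show a 0 * cfP a s + cfP a t = cfP a s * a 0 + cfP a t * 1
        ring
    | ℓ+2 =>
      intro h2
      have ha : a (s+ℓ+1) = a (ℓ+1) := by
        have := hper (ℓ+1) (by omega)
        rw [← this]; congr 1; omega
      have ih1 := ih (ℓ+1) (by omega) (by omega)
      have ih0 := ih ℓ (by omega) (by omega)
      have e1 : s + (ℓ+2) = (s+ℓ+1) + 1 := by omega
      have e2 : s + (ℓ+1) = s+ℓ+1 := by omega
      rw [e2] at ih1
      constructor
      · show cfQ a (s+(ℓ+2)) = cfQ a s * cfQ a (ℓ+2) + cfQ a t * cfP a (ℓ+2)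
        have lhs : cfQ a (s+(ℓ+2)) = a (s+ℓ+1) * cfQ a (s+ℓ+1) + cfQ a (s+ℓ) := by
          rw [show s + (ℓ+2) = (s+ℓ) + 2 by omega]
          rfl
        rw [lhs, ha, ih1.1, ih0.1]
        show _ = cfQ a s * (a (ℓ+1) * cfQ a (ℓ+1) + cfQ a ℓ)
          + cfQ a t * (a (ℓ+1) * cfP a (ℓ+1) + cfP a ℓ)
        ring
      · show cfP a (s+(ℓ+2)) = cfP a s * cfQ a (ℓ+2) + cfP a t * cfP a (ℓ+2)
        have lhs : cfP a (s+(ℓ+2)) = a (s+ℓ+1) * cfP a (s+ℓ+1) + cfP a (s+ℓ) := by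
          rw [show s + (ℓ+2) = (s+ℓ) + 2 by omega]
          rfl
        rw [lhs, ha, ih1.2, ih0.2]
        show _ = cfP a s * (a (ℓ+1) * cfQ a (ℓ+1) + cfQ a ℓ)
          + cfP a t * (a (ℓ+1) * cfP a (ℓ+1) + cfP a ℓ)
        ring

/-- bounds on `e_n = q_n α - p_n`. -/
lemma cf_e_bounds (a : ℕ → ℕ) (hpos : ∀ i, 0 < a i) (α : ℝ)
    (hα : Filter.Tendsto (fun ℓ => (cfP a ℓ : ℝ) / (cfQ a ℓ : ℝ)) Filter.atTop (𝓝 α))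
    (n : ℕ) :
    0 ≤ (-1:ℝ)^n * ((cfQ a n : ℝ) * α - (cfP a n : ℝ)) ∧
      (-1:ℝ)^n * ((cfQ a n : ℝ) * α - (cfP a n : ℝ)) ≤ 1 / (cfQ a (n+1) : ℝ) := by
  have h0 : (0:ℝ) < (cfQ a n : ℝ) := by exact_mod_cast cfQ_pos a hpos n
  have h1 : (0:ℝ) < (cfQ a (n+1) : ℝ) := by exact_mod_cast cfQ_pos a hpos (n+1)
  have hx : Tendsto (fun j => (-1:ℝ)^n * (cfX a j - cfX a n)) atTop
      (𝓝 ((-1:ℝ)^n * (α - cfX a n))) := by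
    exact (hα.sub_const _).const_mul _
  have hlb : 0 ≤ (-1:ℝ)^n * (α - cfX a n) := by
    refine ge_of_tendsto hx ?_
    filter_upwards [eventually_ge_atTop n] with j hj
    obtain ⟨k, rfl⟩ := Nat.exists_eq_add_of_le hj
    exact (cfX_sandwich a hpos k n).1
  have hub : (-1:ℝ)^n * (α - cfX a n) ≤ 1 / ((cfQ a n : ℝ) * (cfQ a (n+1) : ℝ)) := by
    refine le_of_tendsto hx ?_
    filter_upwards [eventually_ge_atTop n] with j hj
    obtain ⟨k, rfl⟩ := Nat.exists_eq_add_of_le hj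
    exact (cfX_sandwich a hpos k n).2
  have key : (cfQ a n : ℝ) * α - (cfP a n : ℝ) = (cfQ a n : ℝ) * (α - cfX a n) := by
    unfold cfX; field_simp
  constructor
  · rw [key]
    calc (0:ℝ) ≤ (cfQ a n : ℝ) * ((-1:ℝ)^n * (α - cfX a n)) :=
          mul_nonneg (le_of_lt h0) hlb
      _ = (-1:ℝ)^n * ((cfQ a n : ℝ) * (α - cfX a n)) := by ring
  · rw [key]
    calc (-1:ℝ)^n * ((cfQ a n : ℝ) * (α - cfX a n))
        = (cfQ a n : ℝ) * ((-1:ℝ)^n * (α - cfX a n)) := by ring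
      _ ≤ (cfQ a n : ℝ) * (1 / ((cfQ a n : ℝ) * (cfQ a (n+1) : ℝ))) :=
          mul_le_mul_of_nonneg_left hub (le_of_lt h0)
      _ = 1 / (cfQ a (n+1) : ℝ) := by field_simp

lemma abs_eq_sign (n : ℕ) (x : ℝ) (h : 0 ≤ (-1:ℝ)^n * x) : |x| = (-1:ℝ)^n * x := by
  rcases Nat.even_or_odd n with he | ho
  · rw [he.neg_one_pow, one_mul] at h ⊢; exact abs_of_nonneg h
  · rw [ho.neg_one_pow, neg_one_mul] at h ⊢; exact abs_of_nonpos (by linarith)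

lemma cf_abs_e (a : ℕ → ℕ) (hpos : ∀ i, 0 < a i) (α : ℝ)
    (hα : Filter.Tendsto (fun ℓ => (cfP a ℓ : ℝ) / (cfQ a ℓ : ℝ)) Filter.atTop (𝓝 α))
    (n : ℕ) :
    |(cfQ a n : ℝ) * α - (cfP a n : ℝ)| ≤ 1 / (cfQ a (n+1) : ℝ) := by
  obtain ⟨h1, h2⟩ := cf_e_bounds a hpos α hα n
  rw [abs_eq_sign n _ h1]
  exact h2

lemma final_calc (α Qs Qt Qr Qm Ps Pt Pr Pm : ℝ)
    (hQspos : 0 < Qs) (hQrpos : 0 < Qr) (hQmpos : 0 < Qm)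
    (hQtQs : Qt ≤ Qs) (hPrQr : Pr ≤ Qr) (hPrnn : 0 ≤ Pr) (hQtnn : 0 ≤ Qt)
    (hQR : Qm = Qs * Qr + Qt * Pr) (hPR : Pm = Ps * Qr + Pt * Pr)
    (habs_em : |Qm * α - Pm| ≤ 1 / Qm)
    (habs_et : |Qt * α - Pt| ≤ 1 / Qs)
    (habs_er : |Qr * α - Pr| ≤ 1 / Qr)
    (huv : (Qm * α - Pm) * ((Qt * α - Pt) * (Qr * α - Pr)) ≤ 0) :
    |Qt * α ^ 2 + (Qs - Pt) * α - Ps| ≤ 4 * Qs / Qm ^ 2 := by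
  set u : ℝ := Qm * α - Pm with hu
  set v : ℝ := (Qt * α - Pt) * (Qr * α - Pr) with hv
  have hrepr : Qt * α ^ 2 + (Qs - Pt) * α - Ps = (v + u) / Qr := by
    rw [eq_div_iff hQrpos.ne', hv, hu]
    linear_combination (-α) * hQR + hPR
  have habs_v : |v| ≤ 1 / (Qs * Qr) := by
    rw [hv, abs_mul]
    calc |Qt * α - Pt| * |Qr * α - Pr| ≤ (1/Qs) * (1/Qr) :=
          mul_le_mul habs_et habs_er (abs_nonneg _) (by positivity)
      _ = 1 / (Qs * Qr) := by rw [div_mul_div_comm, one_mul]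
  have habs : |v + u| ≤ max |v| |u| := by
    rw [abs_le]
    rcases mul_nonpos_iff.mp huv with ⟨h1, h2⟩ | ⟨h1, h2⟩ <;>
    constructor <;>
    · have l1 := le_abs_self u; have l2 := neg_abs_le u
      have l3 := le_abs_self v; have l4 := neg_abs_le v
      have m1 := le_max_left |v| |u|; have m2 := le_max_right |v| |u|
      linarith
  have b1 : |v| * (Qs * Qr) ≤ 1 := (le_div_iff₀ (by positivity)).mp habs_v
  have b2 : |u| * Qm ≤ 1 := (le_div_iff₀ hQmpos).mp habs_em
  have hQm2 : Qm ≤ 2 * Qs * Qr := by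
    nlinarith [mul_le_mul hQtQs hPrQr hPrnn (le_of_lt hQspos)]
  rw [hrepr, abs_div, abs_of_pos hQrpos, div_le_div_iff₀ hQrpos (by positivity)]
  rcases le_total |v| |u| with h | h
  · have h3 : |v + u| ≤ |u| := habs.trans (max_le h le_rfl)
    calc |v + u| * Qm ^ 2 ≤ |u| * Qm ^ 2 := mul_le_mul_of_nonneg_right h3 (sq_nonneg Qm)
      _ = (|u| * Qm) * Qm := by ring
      _ ≤ 1 * Qm := mul_le_mul_of_nonneg_right b2 (le_of_lt hQmpos)
      _ = Qm := one_mul _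
      _ ≤ 2 * Qs * Qr := hQm2
      _ ≤ 4 * Qs * Qr := by nlinarith [mul_pos hQspos hQrpos]
  · have h3 : |v + u| ≤ |v| := habs.trans (max_le le_rfl h)
    have hQm4 : Qm ^ 2 ≤ 4 * (Qs * Qr) ^ 2 := by nlinarith [hQm2, hQmpos, mul_pos hQspos hQrpos]
    calc |v + u| * Qm ^ 2 ≤ |v| * Qm ^ 2 := mul_le_mul_of_nonneg_right h3 (sq_nonneg Qm)
      _ ≤ |v| * (4 * (Qs * Qr) ^ 2) := mul_le_mul_of_nonneg_left hQm4 (abs_nonneg v)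
      _ = (4 * (Qs * Qr)) * (|v| * (Qs * Qr)) := by ring
      _ ≤ (4 * (Qs * Qr)) * 1 := mul_le_mul_of_nonneg_left b1 (by positivity)
      _ = 4 * Qs * Qr := by ring

/-- Inequality (3) of the paper: let `α = [0; a_1, a_2, …]` (with `a i`
encoding `a_{i+1}`) with convergents `p_ℓ/q_ℓ`, and suppose the prefix
`a_1 ⋯ a_m` is periodic with period `s` where `1 ≤ s ≤ m`.  Then the quadratic
polynomial `P(X) = q_{s−1} X² + (q_s − p_{s−1}) X − p_s` satisfies
`|P(α)| ≤ 4 q_s q_m⁻²`. -/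
theorem statement14 (a : ℕ → ℕ) (hpos : ∀ i, 0 < a i) (α : ℝ)
    (hα : Filter.Tendsto (fun ℓ => (cfP a ℓ : ℝ) / (cfQ a ℓ : ℝ)) Filter.atTop (𝓝 α))
    (s m : ℕ) (hs : 1 ≤ s) (hsm : s ≤ m)
    (hper : ∀ i, i + s < m → a (i + s) = a i) :
    |(cfQ a (s - 1) : ℝ) * α ^ 2 + ((cfQ a s : ℝ) - (cfP a (s - 1) : ℝ)) * α
        - (cfP a s : ℝ)| ≤ 4 * (cfQ a s : ℝ) / (cfQ a m : ℝ) ^ 2 := by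
  have hst : s = (s - 1) + 1 := by omega
  set t := s - 1 with ht
  set r := m - s with hr
  have hm : m = s + r := by omega
  obtain ⟨hQid, hPid⟩ := cf_period a s m t hst hsm hper r (le_refl r)
  rw [← hm] at hQid hPid
  apply final_calc α (cfQ a s : ℝ) (cfQ a t : ℝ) (cfQ a r : ℝ) (cfQ a m : ℝ)
      (cfP a s : ℝ) (cfP a t : ℝ) (cfP a r : ℝ) (cfP a m : ℝ)
  · exact_mod_cast cfQ_pos a hpos s
  · exact_mod_cast cfQ_pos a hpos r
  · exact_mod_cast cfQ_pos a hpos m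
  · exact_mod_cast cfQ_mono a hpos (by omega : t ≤ s)
  · exact_mod_cast cfP_le_cfQ a hpos r
  · positivity
  · positivity
  · exact_mod_cast hQid
  · exact_mod_cast hPid
  · -- |e m| ≤ 1/Qm
    calc |(cfQ a m : ℝ) * α - (cfP a m : ℝ)| ≤ 1 / (cfQ a (m+1) : ℝ) :=
          cf_abs_e a hpos α hα m
      _ ≤ 1 / (cfQ a m : ℝ) := by
          apply one_div_le_one_div_of_le
          · exact_mod_cast cfQ_pos a hpos m
          · exact_mod_cast cfQ_mono a hpos (by omega : m ≤ m + 1)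
  · -- |e t| ≤ 1/Qs
    have := cf_abs_e a hpos α hα t
    rwa [← hst] at this
  · -- |e r| ≤ 1/Qr
    calc |(cfQ a r : ℝ) * α - (cfP a r : ℝ)| ≤ 1 / (cfQ a (r+1) : ℝ) :=
          cf_abs_e a hpos α hα r
      _ ≤ 1 / (cfQ a r : ℝ) := by
          apply one_div_le_one_div_of_le
          · exact_mod_cast cfQ_pos a hpos r
          · exact_mod_cast cfQ_mono a hpos (by omega : r ≤ r + 1)
  · -- opposite signs
    have hum := (cf_e_bounds a hpos α hα m).1
    have hut := (cf_e_bounds a hpos α hα t).1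
    have hur := (cf_e_bounds a hpos α hα r).1
    set u : ℝ := (cfQ a m : ℝ) * α - (cfP a m : ℝ) with hu
    set et : ℝ := (cfQ a t : ℝ) * α - (cfP a t : ℝ) with het
    set er : ℝ := (cfQ a r : ℝ) * α - (cfP a r : ℝ) with her
    have hv : 0 ≤ (-1:ℝ)^(t+r) * (et * er) := by
      calc (0:ℝ) ≤ ((-1:ℝ)^t * et) * ((-1:ℝ)^r * er) := mul_nonneg hut hur
        _ = (-1:ℝ)^(t+r) * (et * er) := by rw [pow_add]; ring
    have hmeq : (-1:ℝ)^m = -((-1:ℝ)^(t+r)) := by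
      rw [hm, hst, show t + 1 + r = (t + r) + 1 by omega, pow_succ]
      ring
    rw [hmeq, neg_mul] at hum
    have hB2 : ((-1:ℝ)^(t+r)) * ((-1:ℝ)^(t+r)) = 1 := by
      rw [← pow_add]
      exact Even.neg_one_pow ⟨t + r, rfl⟩
    have hprod : 0 ≤ (-((-1:ℝ)^(t+r) * u)) * ((-1:ℝ)^(t+r) * (et * er)) :=
      mul_nonneg hum hv
    have hkey : (-((-1:ℝ)^(t+r) * u)) * ((-1:ℝ)^(t+r) * (et * er))
        = -(u * (et * er)) := by
      linear_combination (-(u * (et * er))) * hB2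
    rw [hkey] at hprod
    linarith
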